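/- In Algorithm MWHVC with β = ε/(f+ε) and z = ⌈log₂(1/β)⌉, the level ℓ(v) of every vertex is always strictly less than z. (If ℓ(v) ≥ z, the sandwich inequality w(v)(1−2^{−ℓ(v)}) ≤ Σ_{e∈E(v)} δ(e) implies Σ_{e∈E(v)} δ(e) ≥ (1−β)·w(v), so v is β-tight and joins the cover before its level reaches z.) -/
import Mathlib


/-- In Algorithm MWHVC with `β = ε/(f+ε)` and `z = ⌈log₂(1/β)⌉`, the level of every
active vertex is always strictly less than `z`. Hypotheses: `S i v` denotes
`Σ_{e∈E(v)} δ(e)` at iteration `i`; the sandwich lower bound holds for vertices outside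
the cover, and any `β`-tight vertex joins the cover. -/
theorem stmt_5 {V : Type*}
    (w : V → ℝ) (hw : ∀ v, 0 < w v)
    (f : ℕ) (hf : 1 ≤ f) (ε : ℝ) (hε : ε ∈ Set.Ioc (0:ℝ) 1)
    (β : ℝ) (hβ : β = ε / (f + ε))
    (z : ℤ) (hz : z = ⌈Real.logb 2 (1/β)⌉)
    (S : ℕ → V → ℝ) (ℓ : ℕ → V → ℕ) (C : ℕ → Set V)
    (hsand : ∀ i v, v ∉ C i → w v * (1 - (0.5:ℝ) ^ (ℓ i v)) ≤ S i v)
    (hjoin : ∀ i v, (1 - β) * w v ≤ S i v → v ∈ C i) :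
    ∀ i v, v ∉ C i → (ℓ i v : ℤ) < z := by
  intro i v hvC
  by_contra hcon
  push_neg at hcon
  obtain ⟨hε0, hε1⟩ := hε
  have hfε : (0:ℝ) < (f:ℝ) + ε := by
    have : (1:ℝ) ≤ (f:ℝ) := by exact_mod_cast hf
    linarith
  have hβpos : 0 < β := by rw [hβ]; positivity
  -- 2^z ≥ 1/β
  have h2z : 1/β ≤ (2:ℝ) ^ z := by
    have hle : Real.logb 2 (1/β) ≤ (z:ℝ) := by rw [hz]; exact Int.le_ceil _
    have h1 : (1/β : ℝ) = (2:ℝ) ^ (Real.logb 2 (1/β)) := by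
      rw [Real.rpow_logb (by norm_num) (by norm_num) (by positivity)]
    calc (1/β : ℝ) = (2:ℝ) ^ (Real.logb 2 (1/β)) := h1
      _ ≤ (2:ℝ) ^ (z:ℝ) := by
          exact Real.rpow_le_rpow_of_exponent_le (by norm_num) hle
      _ = (2:ℝ) ^ z := by rw [Real.rpow_intCast]
  have hstep : (0.5:ℝ) ^ (ℓ i v) ≤ β := by
    have h05 : (0.5:ℝ) ^ (ℓ i v) = (2:ℝ) ^ (-(ℓ i v : ℤ)) := by
      rw [zpow_neg, zpow_natCast]
      rw [show (0.5:ℝ) = 2⁻¹ by norm_num, inv_pow]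
    have hmono : (2:ℝ) ^ (-(ℓ i v : ℤ)) ≤ (2:ℝ) ^ (-z) := by
      apply zpow_le_zpow_right₀ (by norm_num)
      omega
    have hinv : (2:ℝ) ^ (-z) ≤ β := by
      rw [zpow_neg]
      rw [inv_le_iff_one_le_mul₀ (by positivity)] at *
      have : 1/β ≤ (2:ℝ)^z := h2z
      have h2zpos : (0:ℝ) < (2:ℝ)^z := by positivity
      rw [div_le_iff₀ hβpos] at this
      linarith
    rw [h05]; linarith
  have hsv := hsand i v hvC
  have hjv : (1 - β) * w v ≤ S i v := by
    have hwv := hw v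
    nlinarith
  exact hvC (hjoin i v hjv)
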